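/- arXiv:1709.08031 — 2 statements merged into one kernel-verified Lean document; each statement's English description precedes it below -/
import Mathlib

section
/- In the linear model Y = Xβ + ε with independent, mean-zero errors having variances σ_i^2, the i-th OLS residual u_i = Y_i − x_i'β̂ satisfies Var(u_i) = σ_i^2(1 − p_{ii}) + Σ_{j=1}^N p_{ij}^2 (σ_j^2 − σ_i^2). -/
open MeasureTheory ProbabilityTheory Matrix

lemma aux_isUnit {N c : ℕ} (X : Matrix (Fin N) (Fin c) ℝ) (hX : X.rank = c) :
    IsUnit (Xᵀ * X) := by
  rw [← Matrix.mulVec_surjective_iff_isUnit]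
  have hrank : (Xᵀ * X).rank = c := by rw [Matrix.rank_transpose_mul_self, hX]
  have htop : LinearMap.range (Xᵀ * X).mulVecLin = ⊤ := by
    apply Submodule.eq_top_of_finrank_eq
    rw [← Matrix.rank]
    simp [hrank, Module.finrank_pi]
  intro v
  have : v ∈ LinearMap.range (Xᵀ * X).mulVecLin := htop ▸ Submodule.mem_top
  obtain ⟨w, hw⟩ := this
  exact ⟨w, hw⟩

/-- In the linear model `Y = Xβ + ε` with independent mean-zero errors of
variances `σ_i²`, the `i`-th OLS residual `u_i = Y_i − x_i'β̂` satisfies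
`Var(u_i) = σ_i²(1 − p_{ii}) + Σ_j p_{ij}² (σ_j² − σ_i²)`. -/
theorem stmt_6 {Ω : Type*} [MeasureSpace Ω] [IsProbabilityMeasure (ℙ : Measure Ω)]
    {N c : ℕ} (X : Matrix (Fin N) (Fin c) ℝ) (hX : X.rank = c)
    (β : Fin c → ℝ) (ε : Fin N → Ω → ℝ)
    (hmeas : ∀ i, Measurable (ε i)) (hL2 : ∀ i, MemLp (ε i) 2 ℙ)
    (hindep : iIndepFun ε ℙ)
    (hmean : ∀ i, (∫ ω, ε i ω) = 0)
    (σsq : Fin N → ℝ) (hvar : ∀ i, variance (ε i) ℙ = σsq i)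
    (Y : Ω → Fin N → ℝ) (hY : ∀ ω, Y ω = X.mulVec β + fun i => ε i ω)
    (βhat : Ω → Fin c → ℝ) (hβhat : ∀ ω, βhat ω = ((Xᵀ * X)⁻¹ * Xᵀ).mulVec (Y ω))
    (P : Matrix (Fin N) (Fin N) ℝ) (hP : P = X * (Xᵀ * X)⁻¹ * Xᵀ)
    (u : Ω → Fin N → ℝ) (hu : ∀ ω i, u ω i = Y ω i - X.mulVec (βhat ω) i)
    (i : Fin N) :
    variance (fun ω => u ω i) ℙ =
      σsq i * (1 - P i i) + ∑ j, (P i j)^2 * (σsq j - σsq i) := by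
  classical
  have hU : IsUnit (Xᵀ * X) := aux_isUnit X hX
  have hinv : (Xᵀ * X)⁻¹ * (Xᵀ * X) = 1 :=
    Matrix.nonsing_inv_mul _ ((Matrix.isUnit_iff_isUnit_det _).mp hU)
  have hPX : P * X = X := by
    rw [hP]
    simp only [Matrix.mul_assoc]
    rw [hinv, Matrix.mul_one]
  have hPsymm : Pᵀ = P := by
    rw [hP]
    simp only [Matrix.transpose_mul, Matrix.transpose_transpose, Matrix.transpose_nonsing_inv,
      Matrix.mul_assoc]
  have hPidem : P * P = P := by
    rw [hP]
    simp only [Matrix.mul_assoc]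
    rw [← Matrix.mul_assoc Xᵀ X, ← Matrix.mul_assoc ((Xᵀ * X)⁻¹) (Xᵀ * X), hinv, Matrix.one_mul]
  have hdiag : P i i = ∑ j, (P i j) ^ 2 := by
    conv_lhs => rw [← hPidem]
    rw [Matrix.mul_apply]
    refine Finset.sum_congr rfl fun j _ => ?_
    have : P j i = P i j := by conv_lhs => rw [← hPsymm, Matrix.transpose_apply]
    rw [this, sq]
  -- the residual as a linear combination of the errors
  set a : Fin N → ℝ := fun j => (if j = i then 1 else 0) - P i j with ha
  have hui : ∀ ω, u ω i = ∑ j, a j * ε j ω := by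
    intro ω
    have hXβhat : X.mulVec (βhat ω) = P.mulVec (Y ω) := by
      rw [hβhat, Matrix.mulVec_mulVec, hP, Matrix.mul_assoc]
    have hPY : P.mulVec (Y ω) = X.mulVec β + P.mulVec (fun j => ε j ω) := by
      rw [hY, Matrix.mulVec_add, Matrix.mulVec_mulVec, hPX]
    rw [hu, hXβhat, hPY, hY]
    simp only [Pi.add_apply, Matrix.mulVec, dotProduct]
    have key : ∑ x, a x * ε x ω = ε i ω - ∑ x, P i x * ε x ω := by
      simp only [ha, sub_mul, ite_mul, one_mul, zero_mul]
      rw [Finset.sum_sub_distrib, Finset.sum_ite_eq' Finset.univ i fun x => ε x ω]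
      simp
    rw [key]
    ring
  have hfun : (fun ω => u ω i) = ∑ j, (fun ω => a j * ε j ω) := by
    ext ω
    rw [hui ω, Finset.sum_apply]
  rw [hfun]
  have hmem : ∀ j ∈ Finset.univ, MemLp (fun ω => a j * ε j ω) 2 ℙ := by
    intro j _
    exact (hL2 j).const_mul (a j)
  have hpair : Set.Pairwise ↑(Finset.univ : Finset (Fin N))
      fun j k => IndepFun (fun ω => a j * ε j ω) (fun ω => a k * ε k ω) ℙ := by
    intro j _ k _ hjk
    exact (hindep.indepFun hjk).comp (measurable_const_mul (a j)) (measurable_const_mul (a k))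
  rw [IndepFun.variance_sum hmem hpair]
  have hvj : ∀ j, variance (fun ω => a j * ε j ω) ℙ = a j ^ 2 * σsq j := by
    intro j
    rw [variance_const_mul, hvar]
  simp only [hvj]
  -- algebra
  have hsplit : ∀ j, a j ^ 2 * σsq j =
      (if j = i then (1 - 2 * P i i) * σsq i else 0) + (P i j) ^ 2 * σsq j := by
    intro j
    by_cases hj : j = i
    · subst hj; simp [ha]; ring
    · simp [ha, hj]
  rw [Finset.sum_congr rfl fun j _ => hsplit j, Finset.sum_add_distrib,
    Finset.sum_ite_eq' Finset.univ i fun _ => (1 - 2 * P i i) * σsq i]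
  have hrhs : ∑ j, (P i j) ^ 2 * (σsq j - σsq i) =
      (∑ j, (P i j) ^ 2 * σsq j) - σsq i * P i i := by
    rw [hdiag, Finset.mul_sum, ← Finset.sum_sub_distrib]
    exact Finset.sum_congr rfl fun j _ => by ring
  rw [hrhs]
  simp only [Finset.mem_univ, if_true]
  ring
end

section
/- Given the data Y, the wild bootstrap residual u_i* = Y_i* − x_i'β̂* with bootstrap errors ε_i* = u_i T_i/√(1−p_{ii}) (T_i i.i.d. Rademacher) has conditional second moment E(u_i*^2 | Y) = u_i^2 − (p_{ii}/(1−p_{ii})) u_i^2 + Σ_{j=1}^N p_{ij}^2 u_j^2/(1−p_{jj}). -/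
open MeasureTheory ProbabilityTheory Matrix

section Rad
variable {Ω : Type*} [MeasureSpace Ω] [IsProbabilityMeasure (ℙ : Measure Ω)]
  {N : ℕ} {T : Fin N → Ω → ℝ}

lemma rad_ae (hmeas : ∀ i, Measurable (T i))
    (hdist : ∀ i, ℙ {ω | T i ω = 1} = 1/2 ∧ ℙ {ω | T i ω = -1} = 1/2) (i : Fin N) :
    ∀ᵐ ω, T i ω = 1 ∨ T i ω = -1 := by
  have hA : MeasurableSet {ω | T i ω = 1} := (hmeas i) (measurableSet_singleton 1)
  have hB : MeasurableSet {ω | T i ω = -1} := (hmeas i) (measurableSet_singleton (-1))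
  have hd : Disjoint {ω | T i ω = 1} {ω | T i ω = -1} := by
    rw [Set.disjoint_left]; intro ω h1 h2
    simp only [Set.mem_setOf_eq] at h1 h2
    norm_num [h1] at h2
  have hu : ℙ ({ω | T i ω = 1} ∪ {ω | T i ω = -1}) = 1 := by
    rw [measure_union hd hB, (hdist i).1, (hdist i).2]
    rw [one_div, ENNReal.inv_two_add_inv_two]
  have := prob_compl_eq_zero_iff (hA.union hB) |>.mpr hu
  filter_upwards [MeasureTheory.measure_eq_zero_iff_ae_notMem.mp this] with ω hω
  simpa [Set.mem_union, Set.mem_setOf_eq] using not_not.mp (fun h => hω h)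

lemma rad_integrable (hmeas : ∀ i, Measurable (T i))
    (hdist : ∀ i, ℙ {ω | T i ω = 1} = 1/2 ∧ ℙ {ω | T i ω = -1} = 1/2) (i : Fin N) :
    Integrable (T i) ℙ := by
  refine Integrable.mono' (integrable_const 1) (hmeas i).aestronglyMeasurable ?_
  filter_upwards [rad_ae hmeas hdist i] with ω hω
  rcases hω with h | h <;> simp [h]

lemma rad_integral (hmeas : ∀ i, Measurable (T i))
    (hdist : ∀ i, ℙ {ω | T i ω = 1} = 1/2 ∧ ℙ {ω | T i ω = -1} = 1/2) (i : Fin N) :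
    ∫ ω, T i ω = 0 := by
  have hA : MeasurableSet {ω | T i ω = 1} := (hmeas i) (measurableSet_singleton 1)
  have hB : MeasurableSet {ω | T i ω = -1} := (hmeas i) (measurableSet_singleton (-1))
  have heq : T i =ᵐ[ℙ] fun ω => Set.indicator {ω | T i ω = 1} (fun _ => (1:ℝ)) ω
      + Set.indicator {ω | T i ω = -1} (fun _ => (-1:ℝ)) ω := by
    filter_upwards [rad_ae hmeas hdist i] with ω hω
    rcases hω with h | h
    · have h2 : ω ∉ {ω | T i ω = -1} := by norm_num [Set.mem_setOf_eq, h]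
      simp [Set.indicator_of_mem (show ω ∈ {ω | T i ω = 1} from h), Set.indicator_of_notMem h2, h]
    · have h2 : ω ∉ {ω | T i ω = 1} := by norm_num [Set.mem_setOf_eq, h]
      simp [Set.indicator_of_mem (show ω ∈ {ω | T i ω = -1} from h), Set.indicator_of_notMem h2, h]
  rw [integral_congr_ae heq, integral_add, integral_indicator_const _ hA,
    integral_indicator_const _ hB, measureReal_def, measureReal_def, (hdist i).1, (hdist i).2]
  · norm_num
  · exact (integrable_const 1).indicator hA
  · exact (integrable_const (-1:ℝ)).indicator hB

lemma rad_sq (hmeas : ∀ i, Measurable (T i))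
    (hdist : ∀ i, ℙ {ω | T i ω = 1} = 1/2 ∧ ℙ {ω | T i ω = -1} = 1/2) (i : Fin N) :
    ∫ ω, (T i ω)^2 = 1 := by
  have heq : (fun ω => (T i ω)^2) =ᵐ[ℙ] fun _ => (1:ℝ) := by
    filter_upwards [rad_ae hmeas hdist i] with ω hω
    rcases hω with h | h <;> simp [h]
  rw [integral_congr_ae heq]; simp

lemma rad_prod (hmeas : ∀ i, Measurable (T i))
    (hindep : iIndepFun T ℙ)
    (hdist : ∀ i, ℙ {ω | T i ω = 1} = 1/2 ∧ ℙ {ω | T i ω = -1} = 1/2)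
    {i j : Fin N} (hij : i ≠ j) :
    ∫ ω, T i ω * T j ω = 0 := by
  have h := (hindep.indepFun hij).integral_mul_eq_mul_integral
    (rad_integrable hmeas hdist i).aestronglyMeasurable (rad_integrable hmeas hdist j).aestronglyMeasurable
  calc ∫ ω, T i ω * T j ω = ∫ ω, (T i * T j) ω := by rfl
    _ = (∫ ω, T i ω) * ∫ ω, T j ω := h
    _ = 0 := by rw [rad_integral hmeas hdist i]; ring

lemma rad_sum_sq (hmeas : ∀ i, Measurable (T i))
    (hindep : iIndepFun T ℙ)
    (hdist : ∀ i, ℙ {ω | T i ω = 1} = 1/2 ∧ ℙ {ω | T i ω = -1} = 1/2)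
    (a : Fin N → ℝ) :
    ∫ ω, (∑ j, a j * T j ω)^2 = ∑ j, (a j)^2 := by
  have hint : ∀ j k : Fin N, Integrable (fun ω => a j * T j ω * (a k * T k ω)) ℙ := by
    intro j k
    refine Integrable.mono' (integrable_const (|a j| * |a k|))
      (((hmeas j).const_mul _).mul ((hmeas k).const_mul _)).aestronglyMeasurable ?_
    filter_upwards [rad_ae hmeas hdist j, rad_ae hmeas hdist k] with ω h1 h2
    have e1 : |T j ω| = 1 := by rcases h1 with h | h <;> simp [h]
    have e2 : |T k ω| = 1 := by rcases h2 with h | h <;> simp [h]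
    rw [Real.norm_eq_abs, abs_mul, abs_mul, abs_mul, e1, e2, mul_one, mul_one]
  have hexp : ∀ ω, (∑ j, a j * T j ω)^2 = ∑ j, ∑ k, a j * T j ω * (a k * T k ω) := by
    intro ω; rw [sq, Finset.sum_mul_sum]
  calc ∫ ω, (∑ j, a j * T j ω)^2
      = ∫ ω, ∑ j, ∑ k, a j * T j ω * (a k * T k ω) := by simp_rw [hexp]
    _ = ∑ j, ∫ ω, ∑ k, a j * T j ω * (a k * T k ω) := by
        apply integral_finset_sum
        intro j _; exact integrable_finset_sum _ (fun k _ => hint j k)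
    _ = ∑ j, ∑ k, ∫ ω, a j * T j ω * (a k * T k ω) := by
        congr 1; ext j
        exact integral_finset_sum _ (fun k _ => hint j k)
    _ = ∑ j, (a j)^2 := by
        apply Finset.sum_congr rfl
        intro j _
        rw [Finset.sum_eq_single j]
        · have : (fun ω => a j * T j ω * (a j * T j ω)) = fun ω => (a j * a j) * (T j ω)^2 := by
            ext ω; ring
          rw [this, integral_const_mul, rad_sq hmeas hdist j]; ring
        · intro k _ hkj
          have : (fun ω => a j * T j ω * (a k * T k ω)) = fun ω => (a j * a k) * (T j ω * T k ω) := by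
            ext ω; ring
          rw [this, integral_const_mul, rad_prod hmeas hindep hdist (Ne.symm hkj)]; ring
        · intro h; exact absurd (Finset.mem_univ j) h

end Rad

/-- Given the data (so the residuals `u_i` and fitted values are fixed), the wild
bootstrap residual `u_i* = Y_i* − x_i'β̂*` with bootstrap errors
`ε_i* = u_i T_i/√(1−p_{ii})` (`T_i` i.i.d. Rademacher) has conditional second moment
`E(u_i*² | Y) = u_i² − (p_{ii}/(1−p_{ii})) u_i² + Σ_j p_{ij}² u_j²/(1−p_{jj})`. -/
theorem stmt_8 {Ω : Type*} [MeasureSpace Ω] [IsProbabilityMeasure (ℙ : Measure Ω)]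
    {N c : ℕ} (X : Matrix (Fin N) (Fin c) ℝ) (hX : X.rank = c)
    (P : Matrix (Fin N) (Fin N) ℝ) (hP : P = X * (Xᵀ * X)⁻¹ * Xᵀ)
    (hPlt : ∀ i, P i i < 1)
    (βhat : Fin c → ℝ) (u : Fin N → ℝ)
    (T : Fin N → Ω → ℝ) (hmeas : ∀ i, Measurable (T i))
    (hindep : iIndepFun T ℙ)
    (hdist : ∀ i, ℙ {ω | T i ω = 1} = 1/2 ∧ ℙ {ω | T i ω = -1} = 1/2)
    (εstar : Ω → Fin N → ℝ)
    (hεstar : ∀ ω i, εstar ω i = u i * T i ω / Real.sqrt (1 - P i i))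
    (Ystar : Ω → Fin N → ℝ) (hYstar : ∀ ω, Ystar ω = X.mulVec βhat + εstar ω)
    (βstar : Ω → Fin c → ℝ)
    (hβstar : ∀ ω, βstar ω = ((Xᵀ * X)⁻¹ * Xᵀ).mulVec (Ystar ω))
    (ustar : Ω → Fin N → ℝ)
    (hustar : ∀ ω i, ustar ω i = Ystar ω i - X.mulVec (βstar ω) i)
    (i : Fin N) :
    (∫ ω, (ustar ω i)^2) =
      u i ^ 2 - (P i i / (1 - P i i)) * u i ^ 2 +
        ∑ j, (P i j)^2 * u j ^ 2 / (1 - P j j) := by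
  -- P * X = X
  have hPX : P * X = X := by
    have h1 : (Xᵀ * X).rank = c := by rw [Matrix.rank_transpose_mul_self, hX]
    have h2 : IsUnit (Xᵀ * X) := by
      rw [← Matrix.mulVec_injective_iff_isUnit]
      have hr : LinearMap.range (Xᵀ * X).mulVecLin = ⊤ := by
        apply Submodule.eq_top_of_finrank_eq
        rw [← Matrix.rank, h1, Module.finrank_pi]
        simp
      exact (LinearMap.injective_iff_surjective).mpr (LinearMap.range_eq_top.mp hr)
    have hassoc : X * (Xᵀ * X)⁻¹ * Xᵀ * X = X * ((Xᵀ * X)⁻¹ * (Xᵀ * X)) := by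
      simp [Matrix.mul_assoc]
    rw [hP, hassoc, Matrix.nonsing_inv_mul _ ((Matrix.isUnit_iff_isUnit_det _).mp h2),
      Matrix.mul_one]
  set a : Fin N → ℝ :=
    fun j => ((if j = i then 1 else 0) - P i j) * (u j / Real.sqrt (1 - P j j)) with ha
  have key : ∀ ω, ustar ω i = ∑ j, a j * T j ω := by
    intro ω
    have h1 : X.mulVec (βstar ω) = P.mulVec (Ystar ω) := by
      rw [hβstar, Matrix.mulVec_mulVec, ← Matrix.mul_assoc, ← hP]
    have h2 : P.mulVec (Ystar ω) = X.mulVec βhat + P.mulVec (εstar ω) := by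
      rw [hYstar, Matrix.mulVec_add, Matrix.mulVec_mulVec, hPX]
    rw [hustar, h1, h2, hYstar]
    have h3 : ∀ j, εstar ω j = (u j / Real.sqrt (1 - P j j)) * T j ω := by
      intro j; rw [hεstar]; ring
    simp only [Pi.add_apply, Matrix.mulVec, dotProduct]
    rw [ha]
    simp only [sub_mul, ite_mul, one_mul, zero_mul, mul_assoc]
    rw [Finset.sum_sub_distrib, Finset.sum_ite_eq' Finset.univ i
      (fun j => (u j / Real.sqrt (1 - P j j)) * T j ω)]
    simp only [Finset.mem_univ, if_true, h3]
    ring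
  simp_rw [key]
  rw [rad_sum_sq hmeas hindep hdist a]
  -- algebra
  have hpos : ∀ j, (0:ℝ) < 1 - P j j := fun j => by linarith [hPlt j]
  have hasq : ∀ j, a j ^ 2 =
      ((if j = i then 1 else 0) - P i j)^2 * (u j ^ 2 / (1 - P j j)) := by
    intro j
    rw [ha, mul_pow, div_pow, Real.sq_sqrt (le_of_lt (hpos j))]
  have hsplit : ∑ j, a j ^ 2 =
      (∑ j, (P i j)^2 * u j ^ 2 / (1 - P j j)) +
      ∑ j, (a j ^ 2 - (P i j)^2 * u j ^ 2 / (1 - P j j)) := by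
    rw [← Finset.sum_add_distrib]; apply Finset.sum_congr rfl; intro j _; ring
  have hdiag : ∑ j, (a j ^ 2 - (P i j)^2 * u j ^ 2 / (1 - P j j)) =
      a i ^ 2 - (P i i)^2 * u i ^ 2 / (1 - P i i) :=
    Finset.sum_eq_single i (fun j _ hj => by rw [hasq j, if_neg hj]; ring)
      (fun h => absurd (Finset.mem_univ i) h)
  rw [hsplit, hdiag, hasq i, if_pos rfl]
  have hne : (1 - P i i) ≠ 0 := ne_of_gt (hpos i)
  field_simp
  ring
end
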